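/- (Strong duality for the χ² robust constraint.) Let g₁, …, gₙ ∈ ℝ, ḡ = (1/n)Σᵢ gᵢ, s = √((1/n)Σᵢ (gᵢ − ḡ)²), and suppose ρ > 0, s > 0, and √ρ · (ḡ − gᵢ) ≤ s for every i. Then sup{Σᵢ pᵢ gᵢ : p ∈ Δₙ, (1/n)Σᵢ (n pᵢ − 1)² ≤ ρ} = inf{(1/n)Σᵢ μ φ*((gᵢ − ν)/μ) + μρ + ν : μ > 0, ν ∈ ℝ}, where φ*(u) = u²/4 + u, and the common value is ḡ + √ρ · s. -/

import Mathlib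

open scoped BigOperators

set_option maxHeartbeats 1000000 in
/-- **Strong duality for the χ² robust constraint.**
Let `g₁, …, gₙ ∈ ℝ`, `ḡ = (1/n)Σᵢ gᵢ`, `s = √((1/n)Σᵢ (gᵢ − ḡ)²)`, and suppose `ρ > 0`,
`s > 0`, and `√ρ · (ḡ − gᵢ) ≤ s` for every `i`. Then the distributionally robust average
`sup{Σᵢ pᵢ gᵢ : p ∈ Δₙ, (1/n)Σᵢ (n pᵢ − 1)² ≤ ρ}` equals its Lagrangian dual
`inf{(1/n)Σᵢ μ φ*((gᵢ − ν)/μ) + μρ + ν : μ > 0, ν ∈ ℝ}` with `φ*(u) = u²/4 + u`, the common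
value being `ḡ + √ρ · s`. -/
theorem strong_duality_chiSq_robust (n : ℕ) (hn : 0 < n) (g : Fin n → ℝ)
    (ρ : ℝ) (hρ : 0 < ρ) (gbar s : ℝ)
    (hgbar : gbar = (1 / (n : ℝ)) * ∑ i, g i)
    (hs : s = Real.sqrt ((1 / (n : ℝ)) * ∑ i, (g i - gbar) ^ 2))
    (hspos : 0 < s)
    (hcond : ∀ i, Real.sqrt ρ * (gbar - g i) ≤ s) :
    sSup {x : ℝ | ∃ p : Fin n → ℝ, (∀ i, 0 ≤ p i) ∧ (∑ i, p i) = 1 ∧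
        (1 / (n : ℝ)) * ∑ i, ((n : ℝ) * p i - 1) ^ 2 ≤ ρ ∧ x = ∑ i, p i * g i}
      = gbar + Real.sqrt ρ * s ∧
    sInf {x : ℝ | ∃ μ : ℝ, 0 < μ ∧ ∃ ν : ℝ,
        x = (1 / (n : ℝ)) * ∑ i, μ * (((g i - ν) / μ) ^ 2 / 4 + (g i - ν) / μ) + μ * ρ + ν}
      = gbar + Real.sqrt ρ * s := by
  have hn0 : (0:ℝ) < (n:ℝ) := by exact_mod_cast hn
  have hnne : (n:ℝ) ≠ 0 := ne_of_gt hn0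
  set r := Real.sqrt ρ with hr
  have hrpos : 0 < r := Real.sqrt_pos.mpr hρ
  have hr2 : r ^ 2 = ρ := Real.sq_sqrt hρ.le
  have hsum_g : ∑ i, g i = (n:ℝ) * gbar := by
    rw [hgbar]; field_simp
  have hsum_dev : ∑ i, (g i - gbar) = 0 := by
    rw [Finset.sum_sub_distrib, hsum_g]
    simp [Finset.card_fin]
  have hsq_nonneg : (0:ℝ) ≤ (1 / (n : ℝ)) * ∑ i, (g i - gbar) ^ 2 := by
    positivity
  have hs2 : s ^ 2 = (1 / (n : ℝ)) * ∑ i, (g i - gbar) ^ 2 := by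
    rw [hs, Real.sq_sqrt hsq_nonneg]
  have hsum_sq : ∑ i, (g i - gbar) ^ 2 = (n:ℝ) * s ^ 2 := by
    rw [hs2]; field_simp
  -- the common value
  set v := gbar + r * s with hv
  constructor
  · -- PRIMAL
    have hub : ∀ x ∈ {x : ℝ | ∃ p : Fin n → ℝ, (∀ i, 0 ≤ p i) ∧ (∑ i, p i) = 1 ∧
        (1 / (n : ℝ)) * ∑ i, ((n : ℝ) * p i - 1) ^ 2 ≤ ρ ∧ x = ∑ i, p i * g i}, x ≤ v := by
      rintro x ⟨p, hp0, hp1, hpc, rfl⟩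
      have hq : ∑ i, (p i - 1/(n:ℝ)) ^ 2 ≤ ρ / (n:ℝ) := by
        have h1 : ∑ i, ((n:ℝ) * p i - 1) ^ 2 = (n:ℝ)^2 * ∑ i, (p i - 1/(n:ℝ)) ^ 2 := by
          rw [Finset.mul_sum]
          refine Finset.sum_congr rfl fun i _ => ?_
          field_simp
        rw [h1] at hpc
        have e : (1/(n:ℝ)) * ((n:ℝ)^2 * ∑ i, (p i - 1/(n:ℝ)) ^ 2)
            = (n:ℝ) * ∑ i, (p i - 1/(n:ℝ)) ^ 2 := by field_simp
        rw [e] at hpc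
        rw [le_div_iff₀ hn0]
        linarith
      have hdecomp : ∑ i, p i * g i = (∑ i, (p i - 1/(n:ℝ)) * (g i - gbar)) + gbar := by
        have : ∀ i, (p i - 1/(n:ℝ)) * (g i - gbar)
            = p i * g i - gbar * p i - (1/(n:ℝ)) * g i + (1/(n:ℝ)) * gbar := by
          intro i; ring
        simp_rw [this]
        rw [Finset.sum_add_distrib, Finset.sum_sub_distrib, Finset.sum_sub_distrib,
          ← Finset.mul_sum, ← Finset.mul_sum, hp1, hsum_g, Finset.sum_const,
          Finset.card_fin, nsmul_eq_mul]
        field_simp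
        ring
      have hcs := Finset.sum_mul_sq_le_sq_mul_sq Finset.univ
        (fun i => p i - 1/(n:ℝ)) (fun i => g i - gbar)
      have hsum_q_nonneg : (0:ℝ) ≤ ∑ i, (p i - 1/(n:ℝ)) ^ 2 :=
        Finset.sum_nonneg fun i _ => sq_nonneg _
      have hbound : (∑ i, (p i - 1/(n:ℝ)) * (g i - gbar)) ^ 2 ≤ (r * s) ^ 2 := by
        calc (∑ i, (p i - 1/(n:ℝ)) * (g i - gbar)) ^ 2
            ≤ (∑ i, (p i - 1/(n:ℝ)) ^ 2) * ∑ i, (g i - gbar) ^ 2 := hcs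
          _ ≤ (ρ / (n:ℝ)) * ((n:ℝ) * s ^ 2) := by
              rw [hsum_sq]
              apply mul_le_mul_of_nonneg_right hq (by positivity)
          _ = (r * s) ^ 2 := by rw [← hr2]; field_simp
      have : (∑ i, (p i - 1/(n:ℝ)) * (g i - gbar)) ≤ r * s := by
        nlinarith [hbound, mul_pos hrpos hspos]
      rw [hdecomp, hv]; linarith
    have hmem : v ∈ {x : ℝ | ∃ p : Fin n → ℝ, (∀ i, 0 ≤ p i) ∧ (∑ i, p i) = 1 ∧
        (1 / (n : ℝ)) * ∑ i, ((n : ℝ) * p i - 1) ^ 2 ≤ ρ ∧ x = ∑ i, p i * g i} := by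
      refine ⟨fun i => 1/(n:ℝ) + r * (g i - gbar) / ((n:ℝ) * s), ?_, ?_, ?_, ?_⟩
      · intro i
        have h := hcond i
        have : 0 ≤ s + r * (g i - gbar) := by nlinarith
        have hns : (0:ℝ) < (n:ℝ) * s := by positivity
        dsimp only
        have h2 : 0 ≤ (s + r * (g i - gbar)) / ((n:ℝ) * s) := div_nonneg this hns.le
        calc (0:ℝ) ≤ (s + r * (g i - gbar)) / ((n:ℝ) * s) := h2
          _ = 1/(n:ℝ) + r * (g i - gbar) / ((n:ℝ) * s) := by
              field_simp
      · rw [Finset.sum_add_distrib]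
        have h1 : ∑ _i : Fin n, 1/(n:ℝ) = 1 := by
          simp [Finset.card_fin]
          exact mul_inv_cancel₀ hnne
        have h2 : ∑ i, r * (g i - gbar) / ((n:ℝ) * s) = 0 := by
          simp_rw [mul_div_assoc, ← Finset.mul_sum, ← Finset.sum_div, hsum_dev]
          simp
        rw [h1, h2, add_zero]
      · have h1 : ∀ i, ((n:ℝ) * (1/(n:ℝ) + r * (g i - gbar) / ((n:ℝ) * s)) - 1) ^ 2
            = (r^2 / s^2) * (g i - gbar)^2 := by
          intro i
          field_simp
          ring
        simp_rw [h1]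
        rw [← Finset.mul_sum, hsum_sq]
        have : 1/(n:ℝ) * (r^2/s^2 * ((n:ℝ) * s^2)) = ρ := by
          field_simp [hr2]
          exact hr2
        rw [this]
      · have h1 : ∀ i, (1/(n:ℝ) + r * (g i - gbar) / ((n:ℝ) * s)) * g i
            = (1/(n:ℝ)) * g i + (r / ((n:ℝ) * s)) * ((g i - gbar)^2 + gbar * (g i - gbar)) := by
          intro i
          field_simp
          ring
        simp_rw [h1]
        rw [Finset.sum_add_distrib, ← Finset.mul_sum, ← Finset.mul_sum, hsum_g,
          Finset.sum_add_distrib, hsum_sq, ← Finset.mul_sum, hsum_dev]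
        field_simp
        ring
    exact le_antisymm (csSup_le ⟨v, hmem⟩ hub) (le_csSup ⟨v, hub⟩ hmem)
  · -- DUAL
    have hlb : ∀ x ∈ {x : ℝ | ∃ μ : ℝ, 0 < μ ∧ ∃ ν : ℝ,
        x = (1 / (n : ℝ)) * ∑ i, μ * (((g i - ν) / μ) ^ 2 / 4 + (g i - ν) / μ) + μ * ρ + ν},
        v ≤ x := by
      rintro x ⟨μ, hμ, ν, rfl⟩
      have hμne : μ ≠ 0 := ne_of_gt hμ
      have hterm : ∀ i : Fin n, μ * (((g i - ν) / μ) ^ 2 / 4 + (g i - ν) / μ)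
          = (g i - ν)^2 / (4*μ) + (g i - ν) := by
        intro i; field_simp
      have hsum_ν : ∑ i, (g i - ν) = (n:ℝ) * (gbar - ν) := by
        rw [Finset.sum_sub_distrib, hsum_g]; simp [Finset.card_fin]; ring
      have hsum_ν2 : ∑ i, (g i - ν)^2 = (n:ℝ) * s^2 + (n:ℝ) * (gbar - ν)^2 := by
        have : ∀ i : Fin n, (g i - ν)^2
            = (g i - gbar)^2 + 2*(gbar - ν)*(g i - gbar) + (gbar - ν)^2 := by
          intro i; ring
        simp_rw [this]
        rw [Finset.sum_add_distrib, Finset.sum_add_distrib, hsum_sq, ← Finset.mul_sum,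
          hsum_dev]
        simp [Finset.card_fin]
      have hx : (1 / (n : ℝ)) * ∑ i, μ * (((g i - ν) / μ) ^ 2 / 4 + (g i - ν) / μ) + μ * ρ + ν
          = (s^2 + (gbar - ν)^2)/(4*μ) + gbar + μ * ρ := by
        simp_rw [hterm]
        rw [Finset.sum_add_distrib, ← Finset.sum_div, hsum_ν2, hsum_ν]
        field_simp
        ring
      rw [hx, hv]
      have hkey : r * s - μ * ρ ≤ (s^2 + (gbar - ν)^2)/(4*μ) := by
        rw [← hr2, le_div_iff₀ (by positivity)]
        nlinarith [sq_nonneg (s - 2*μ*r), sq_nonneg (gbar - ν)]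
      linarith
    have hmem : v ∈ {x : ℝ | ∃ μ : ℝ, 0 < μ ∧ ∃ ν : ℝ,
        x = (1 / (n : ℝ)) * ∑ i, μ * (((g i - ν) / μ) ^ 2 / 4 + (g i - ν) / μ) + μ * ρ + ν} := by
      refine ⟨s/(2*r), by positivity, gbar, ?_⟩
      set μ := s/(2*r) with hμdef
      have hμ : 0 < μ := by positivity
      have hμne : μ ≠ 0 := ne_of_gt hμ
      have hterm : ∀ i : Fin n, μ * (((g i - gbar) / μ) ^ 2 / 4 + (g i - gbar) / μ)
          = (g i - gbar)^2 / (4*μ) + (g i - gbar) := by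
        intro i; field_simp
      simp_rw [hterm]
      rw [Finset.sum_add_distrib, ← Finset.sum_div, hsum_sq, hsum_dev, add_zero]
      rw [hv, hμdef]
      have hrne : r ≠ 0 := ne_of_gt hrpos
      have hsne : s ≠ 0 := ne_of_gt hspos
      rw [← hr2]
      field_simp
      ring
    exact le_antisymm (csInf_le ⟨v, hlb⟩ hmem) (le_csInf ⟨v, hmem⟩ hlb)
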